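/- arXiv:2203.07322 — 5 statements merged into one kernel-verified Lean document; each statement's English description precedes it below -/
import Mathlib

section
/- Fix an agent index i and a horizon of T rounds. Let Ω = Ω_1 × ⋯ × Ω_N be a product of nonempty measurable spaces (the agents' policy spaces), and for each round t = 1,…,T let P_t be a probability measure on Ω. Let V : Ω → ℝ and, for each t, U_t : Ω → ℝ be measurable functions bounded in absolute value by a constant B, and assume the pointwise domination V(π) ≤ U_t(π) for every π ∈ Ω and every t. Assume every deviation map D^i_d is measurable and that each P_t is a coarse correlated equilibrium for agent i with respect to the optimistic payoff U_t, i.e. ∫ U_t ∘ D^i_d dP_t ≤ ∫ U_t dP_t for every d ∈ Ω_i. Then agent i's dynamic regret satisfies ∑_{t=1}^T ( sup_{d ∈ Ω_i} ∫ V ∘ D^i_d dP_t − ∫ V dP_t ) ≤ ∑_{t=1}^T ∫ (U_t − V) dP_t. -/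
open MeasureTheory

/-- game-theoretic core of Theorem 1 of the paper.
Playing, at each of `T` rounds, a coarse correlated equilibrium (for agent `i`)
of the optimistic game `U t` which pointwise dominates the true payoff `V`
bounds the dynamic regret of agent `i` by the accumulated optimism gap. -/
theorem dynamic_regret_le_optimism_gap
    {N : ℕ} (Ω : Fin N → Type*) [∀ j, MeasurableSpace (Ω j)] [∀ j, Nonempty (Ω j)]
    (i : Fin N) (T : ℕ)
    (P : Fin T → Measure (∀ j, Ω j)) [∀ t, IsProbabilityMeasure (P t)]
    (V : (∀ j, Ω j) → ℝ) (U : Fin T → (∀ j, Ω j) → ℝ) (B : ℝ)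
    (hVmeas : Measurable V) (hUmeas : ∀ t, Measurable (U t))
    (hVbd : ∀ π, |V π| ≤ B) (hUbd : ∀ t π, |U t π| ≤ B)
    (hdom : ∀ (t : Fin T) (π : ∀ j, Ω j), V π ≤ U t π)
    (hDmeas : ∀ d : Ω i, Measurable (fun π : ∀ j, Ω j => Function.update π i d))
    (hCCE : ∀ (t : Fin T) (d : Ω i),
      ∫ π, U t (Function.update π i d) ∂(P t) ≤ ∫ π, U t π ∂(P t)) :
    ∑ t : Fin T,
        ((⨆ d : Ω i, ∫ π, V (Function.update π i d) ∂(P t)) - ∫ π, V π ∂(P t))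
      ≤ ∑ t : Fin T, ∫ π, (U t π - V π) ∂(P t) := by
  have hint : ∀ (f : (∀ j, Ω j) → ℝ), Measurable f → (∀ π, |f π| ≤ B) →
      ∀ μ : Measure (∀ j, Ω j), IsProbabilityMeasure μ → Integrable f μ := by
    intro f hf hb μ _
    exact (integrable_const B).mono' hf.aestronglyMeasurable (ae_of_all _ hb)
  apply Finset.sum_le_sum
  intro t _
  have hVint : Integrable V (P t) := hint V hVmeas hVbd _ inferInstance
  have hUint : Integrable (U t) (P t) := hint (U t) (hUmeas t) (hUbd t) _ inferInstance
  rw [integral_sub hUint hVint]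
  have hsup : (⨆ d : Ω i, ∫ π, V (Function.update π i d) ∂(P t))
      ≤ ∫ π, U t π ∂(P t) := by
    apply ciSup_le
    intro d
    calc ∫ π, V (Function.update π i d) ∂(P t)
        ≤ ∫ π, U t (Function.update π i d) ∂(P t) := by
          apply integral_mono
          · exact hint _ (hVmeas.comp (hDmeas d)) (fun π => hVbd _) _ inferInstance
          · exact hint _ ((hUmeas t).comp (hDmeas d)) (fun π => hUbd t _) _ inferInstance
          · exact fun π => hdom t _
      _ ≤ ∫ π, U t π ∂(P t) := hCCE t d
  linarith
end

section
/- Fix an agent index i and a horizon of T rounds. Let Ω = Ω_1 × ⋯ × Ω_N be a product of nonempty measurable spaces, for each round t = 1,…,T let P_t be a probability measure on Ω, and let ε_t ≥ 0. Let V : Ω → ℝ and, for each t, U_t : Ω → ℝ be measurable functions bounded in absolute value by a constant B, with V(π) ≤ U_t(π) for every π ∈ Ω and every t. Assume every deviation map D^i_d is measurable and that each P_t is an ε_t-approximate coarse correlated equilibrium for agent i with respect to U_t, i.e. ∫ U_t ∘ D^i_d dP_t ≤ ∫ U_t dP_t + ε_t for every d ∈ Ω_i. Then agent i's dynamic regret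 satisfies ∑_{t=1}^T ( sup_{d ∈ Ω_i} ∫ V ∘ D^i_d dP_t − ∫ V dP_t ) ≤ ∑_{t=1}^T ε_t + ∑_{t=1}^T ∫ (U_t − V) dP_t. -/
open MeasureTheory

/-- game-theoretic core of Theorem 4 of the paper, approximate CCEs.
Playing, at each of `T` rounds, an `ε t`-approximate coarse correlated equilibrium
(for agent `i`) of the optimistic game `U t` which pointwise dominates the true payoff `V`
bounds the dynamic regret of agent `i` by `∑ ε t` plus the accumulated optimism gap. -/
theorem dynamic_regret_le_eps_plus_optimism_gap
    {N : ℕ} (Ω : Fin N → Type*) [∀ j, MeasurableSpace (Ω j)] [∀ j, Nonempty (Ω j)]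
    (i : Fin N) (T : ℕ)
    (P : Fin T → Measure (∀ j, Ω j)) [∀ t, IsProbabilityMeasure (P t)]
    (ε : Fin T → ℝ) (hε : ∀ t, 0 ≤ ε t)
    (V : (∀ j, Ω j) → ℝ) (U : Fin T → (∀ j, Ω j) → ℝ) (B : ℝ)
    (hVmeas : Measurable V) (hUmeas : ∀ t, Measurable (U t))
    (hVbd : ∀ π, |V π| ≤ B) (hUbd : ∀ t π, |U t π| ≤ B)
    (hdom : ∀ (t : Fin T) (π : ∀ j, Ω j), V π ≤ U t π)
    (hDmeas : ∀ d : Ω i, Measurable (fun π : ∀ j, Ω j => Function.update π i d))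
    (hCCE : ∀ (t : Fin T) (d : Ω i),
      ∫ π, U t (Function.update π i d) ∂(P t) ≤ (∫ π, U t π ∂(P t)) + ε t) :
    ∑ t : Fin T,
        ((⨆ d : Ω i, ∫ π, V (Function.update π i d) ∂(P t)) - ∫ π, V π ∂(P t))
      ≤ (∑ t : Fin T, ε t) + ∑ t : Fin T, ∫ π, (U t π - V π) ∂(P t) := by
  rw [← Finset.sum_add_distrib]
  apply Finset.sum_le_sum
  intro t _
  have hVint : Integrable V (P t) :=
    ⟨hVmeas.aestronglyMeasurable, HasFiniteIntegral.of_bounded (C := B)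
      (Filter.Eventually.of_forall fun π => by simpa using hVbd π)⟩
  have hUint : Integrable (U t) (P t) :=
    ⟨(hUmeas t).aestronglyMeasurable, HasFiniteIntegral.of_bounded (C := B)
      (Filter.Eventually.of_forall fun π => by simpa using hUbd t π)⟩
  have hVDint : ∀ d : Ω i, Integrable (fun π => V (Function.update π i d)) (P t) :=
    fun d => ⟨(hVmeas.comp (hDmeas d)).aestronglyMeasurable,
      HasFiniteIntegral.of_bounded (C := B)
        (Filter.Eventually.of_forall fun π => by simpa using hVbd _)⟩
  have hUDint : ∀ d : Ω i, Integrable (fun π => U t (Function.update π i d)) (P t) :=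
    fun d => ⟨((hUmeas t).comp (hDmeas d)).aestronglyMeasurable,
      HasFiniteIntegral.of_bounded (C := B)
        (Filter.Eventually.of_forall fun π => by simpa using hUbd t _)⟩
  have hsup : (⨆ d : Ω i, ∫ π, V (Function.update π i d) ∂(P t))
      ≤ (∫ π, U t π ∂(P t)) + ε t := by
    apply ciSup_le
    intro d
    calc ∫ π, V (Function.update π i d) ∂(P t)
        ≤ ∫ π, U t (Function.update π i d) ∂(P t) :=
          integral_mono (hVDint d) (hUDint d) fun π => hdom t _
      _ ≤ (∫ π, U t π ∂(P t)) + ε t := hCCE t d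
  rw [integral_sub hUint hVint]
  linarith [hsup]
end

section
/- Let Ω = Ω_1 × ⋯ × Ω_N be a product of nonempty measurable spaces and fix a horizon of T ≥ 1 rounds. For each agent i ∈ {1,…,N} let V^i : Ω → ℝ be measurable and bounded, and for each round t = 1,…,T let U_t^i, L_t^i : Ω → ℝ be measurable and bounded with the pointwise sandwich L_t^i(π) ≤ V^i(π) ≤ U_t^i(π) for all π ∈ Ω. For each t let P_t be a probability measure on Ω that is a coarse correlated equilibrium for the payoffs (U_t^1,…,U_t^N), i.e. for every agent i and every d ∈ Ω_i, ∫ U_t^i ∘ D^i_d dP_t ≤ ∫ U_t^i dP_t (all deviation maps assumed measurable). Let t^⋆ ∈ {1,…,T} be a minimizer of t ↦ max_{i ∈ {1,…,N}} ∫ (U_t^i − L_t^i) dP_t. Then P_{t^⋆} is an ε-coarse correlated equilibrium of the true game (V^1,…,V^N) with ε = (1/T) ∑_{t=1}^T max_{i} ∫ (U_t^i − L_t^i) dP_t; that is, for every agent i and every d ∈ Ω_i, ∫ V^i ∘ D^i_d dP_{t^⋆} − ∫ V^i dP_{t^⋆} ≤ (1/T) ∑_{t=1}^T max_{i'} ∫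 (U_t^{i'} − L_t^{i'}) dP_t. -/
open MeasureTheory

/-- core of Theorem 2 of the paper: offline convergence to an ε-CCE.
If each `P t` is a CCE of the optimistic game `(U t 1, …, U t N)` and the payoffs are
sandwiched `L t i ≤ V i ≤ U t i`, then the round `tstar` minimizing the worst-case
confidence width yields an ε-CCE of the true game `(V 1, …, V N)` with
`ε = (1/T) ∑_t max_i ∫ (U t i − L t i) dP t`. -/
theorem offline_eps_CCE
    {N T : ℕ} [NeZero N] [NeZero T]
    (Ω : Fin N → Type*) [∀ j, MeasurableSpace (Ω j)] [∀ j, Nonempty (Ω j)]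
    (V : Fin N → (∀ j, Ω j) → ℝ)
    (U L : Fin T → Fin N → (∀ j, Ω j) → ℝ)
    (B : ℝ)
    (hVmeas : ∀ i, Measurable (V i)) (hVbd : ∀ i π, |V i π| ≤ B)
    (hUmeas : ∀ t i, Measurable (U t i)) (hUbd : ∀ t i π, |U t i π| ≤ B)
    (hLmeas : ∀ t i, Measurable (L t i)) (hLbd : ∀ t i π, |L t i π| ≤ B)
    (hsand : ∀ (t : Fin T) (i : Fin N) (π : ∀ j, Ω j),
      L t i π ≤ V i π ∧ V i π ≤ U t i π)
    (hDmeas : ∀ (i : Fin N) (d : Ω i),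
      Measurable (fun π : ∀ j, Ω j => Function.update π i d))
    (P : Fin T → Measure (∀ j, Ω j)) [∀ t, IsProbabilityMeasure (P t)]
    (hCCE : ∀ (t : Fin T) (i : Fin N) (d : Ω i),
      ∫ π, U t i (Function.update π i d) ∂(P t) ≤ ∫ π, U t i π ∂(P t))
    (tstar : Fin T)
    (hmin : ∀ t : Fin T,
      (⨆ i : Fin N, ∫ π, (U tstar i π - L tstar i π) ∂(P tstar))
        ≤ ⨆ i : Fin N, ∫ π, (U t i π - L t i π) ∂(P t)) :
    ∀ (i : Fin N) (d : Ω i),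
      (∫ π, V i (Function.update π i d) ∂(P tstar)) - ∫ π, V i π ∂(P tstar)
        ≤ (1 / (T : ℝ)) *
            ∑ t : Fin T, ⨆ i' : Fin N, ∫ π, (U t i' π - L t i' π) ∂(P t) := by
  intro i d
  have hT : (0:ℝ) < T := by
    exact_mod_cast Nat.pos_of_ne_zero (NeZero.ne T)
  -- integrability helper
  have hint : ∀ (f : (∀ j, Ω j) → ℝ), Measurable f → (∀ π, |f π| ≤ B) →
      Integrable f (P tstar) := by
    intro f hf hb
    exact Integrable.mono' (integrable_const B) hf.aestronglyMeasurable
      (ae_of_all _ hb)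
  have hVint : Integrable (V i) (P tstar) := hint _ (hVmeas i) (hVbd i)
  have hUint : Integrable (U tstar i) (P tstar) := hint _ (hUmeas _ i) (hUbd _ i)
  have hLint : Integrable (L tstar i) (P tstar) := hint _ (hLmeas _ i) (hLbd _ i)
  have hVDint : Integrable (fun π => V i (Function.update π i d)) (P tstar) :=
    hint _ ((hVmeas i).comp (hDmeas i d)) (fun π => hVbd i _)
  have hUDint : Integrable (fun π => U tstar i (Function.update π i d)) (P tstar) :=
    hint _ ((hUmeas tstar i).comp (hDmeas i d)) (fun π => hUbd _ i _)
  -- step 1: ∫ V∘D ≤ ∫ U∘D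
  have h1 : (∫ π, V i (Function.update π i d) ∂(P tstar))
      ≤ ∫ π, U tstar i (Function.update π i d) ∂(P tstar) :=
    integral_mono hVDint hUDint (fun π => (hsand tstar i _).2)
  -- step 2: CCE
  have h2 := hCCE tstar i d
  -- step 3: ∫ L ≤ ∫ V
  have h3 : (∫ π, L tstar i π ∂(P tstar)) ≤ ∫ π, V i π ∂(P tstar) :=
    integral_mono hLint hVint (fun π => (hsand tstar i π).1)
  have hdiff : (∫ π, V i (Function.update π i d) ∂(P tstar)) - ∫ π, V i π ∂(P tstar)
      ≤ ∫ π, (U tstar i π - L tstar i π) ∂(P tstar) := by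
    rw [integral_sub hUint hLint]
    linarith
  -- bound by sup
  have hbdd : BddAbove (Set.range fun i' : Fin N =>
      ∫ π, (U tstar i' π - L tstar i' π) ∂(P tstar)) :=
    Set.Finite.bddAbove (Set.finite_range _)
  have hsup : (∫ π, (U tstar i π - L tstar i π) ∂(P tstar))
      ≤ ⨆ i' : Fin N, ∫ π, (U tstar i' π - L tstar i' π) ∂(P tstar) :=
    le_ciSup hbdd i
  -- min ≤ average
  have havg : (⨆ i' : Fin N, ∫ π, (U tstar i' π - L tstar i' π) ∂(P tstar))
      ≤ (1 / (T : ℝ)) * ∑ t : Fin T, ⨆ i' : Fin N, ∫ π, (U t i' π - L t i' π) ∂(P t) := by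
    rw [div_mul_eq_mul_div, one_mul, le_div_iff₀ hT]
    calc (⨆ i' : Fin N, ∫ π, (U tstar i' π - L tstar i' π) ∂(P tstar)) * T
        = ∑ _t : Fin T, ⨆ i' : Fin N, ∫ π, (U tstar i' π - L tstar i' π) ∂(P tstar) := by
          simp [Finset.sum_const, mul_comm]
      _ ≤ ∑ t : Fin T, ⨆ i' : Fin N, ∫ π, (U t i' π - L t i' π) ∂(P t) :=
          Finset.sum_le_sum (fun t _ => hmin t)
  linarith
end

section
/- Let E be a normed vector space, let g, g̃ : E → E, let ε : E → ℝ, let w : ℕ → E be a fixed sequence, and let s, s̃ : ℕ → E be sequences with s_0 = s̃_0, s_{h+1} = g(s_h) + w_h and s̃_{h+1} = g̃(s̃_h) + w_h for all h ≥ 0. Assume: (i) g is Lipschitz with constant L ≥ 0; (ii) ‖g(x) − g̃(x)‖ ≤ ε(x) for all x ∈ E; (iii) ε is Lipschitz with constant L_ε ≥ 0, i.e. |ε(x) − ε(y)| ≤ L_ε ‖x − y‖ for all x, y. Set L̄ = 1 + L + L_ε. Then for every h ≥ 1, ‖s_h − s̃_h‖ ≤ L̄^{h−1} · ∑_{τ=0}^{h−1}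 ε(s_τ). -/
/-- deterministic trajectory-divergence bound, used in Lemma 2.
Two trajectories driven by the same noise sequence `w` but by dynamics `g`
(`L`-Lipschitz) and `g̃` (whose pointwise deviation from `g` is bounded by the
`L_ε`-Lipschitz function `ε`) satisfy
`‖s_h − s̃_h‖ ≤ (1 + L + L_ε)^(h−1) ∑_{τ<h} ε (s_τ)` for every `h ≥ 1`. -/
theorem trajectory_divergence
    {E : Type*} [NormedAddCommGroup E] [NormedSpace ℝ E]
    (g gt : E → E) (ε : E → ℝ) (w : ℕ → E) (s st : ℕ → E)
    (L Lε : ℝ) (hL : 0 ≤ L) (hLε : 0 ≤ Lε)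
    (h0 : s 0 = st 0)
    (hs : ∀ h : ℕ, s (h + 1) = g (s h) + w h)
    (hst : ∀ h : ℕ, st (h + 1) = gt (st h) + w h)
    (hg : ∀ x y : E, ‖g x - g y‖ ≤ L * ‖x - y‖)
    (hdev : ∀ x : E, ‖g x - gt x‖ ≤ ε x)
    (hε : ∀ x y : E, |ε x - ε y| ≤ Lε * ‖x - y‖) :
    ∀ h : ℕ, 1 ≤ h →
      ‖s h - st h‖ ≤ (1 + L + Lε) ^ (h - 1) * ∑ τ ∈ Finset.range h, ε (s τ) := by
  have hεpos : ∀ x : E, 0 ≤ ε x := fun x => le_trans (norm_nonneg _) (hdev x)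
  have hLbar : (1 : ℝ) ≤ 1 + L + Lε := by linarith
  -- key one-step bound
  have step : ∀ h : ℕ, ‖s (h + 1) - st (h + 1)‖ ≤
      (L + Lε) * ‖s h - st h‖ + ε (s h) := by
    intro h
    have e1 : s (h + 1) - st (h + 1) = (g (s h) - g (st h)) + (g (st h) - gt (st h)) := by
      rw [hs, hst]; abel
    calc ‖s (h + 1) - st (h + 1)‖
        ≤ ‖g (s h) - g (st h)‖ + ‖g (st h) - gt (st h)‖ := by rw [e1]; exact norm_add_le _ _
      _ ≤ L * ‖s h - st h‖ + ε (st h) := add_le_add (hg _ _) (hdev _)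
      _ ≤ L * ‖s h - st h‖ + (ε (s h) + Lε * ‖s h - st h‖) := by
          have := hε (st h) (s h)
          have h2 : ε (st h) - ε (s h) ≤ Lε * ‖st h - s h‖ := le_trans (le_abs_self _) this
          rw [norm_sub_rev (st h)] at h2
          linarith
      _ = (L + Lε) * ‖s h - st h‖ + ε (s h) := by ring
  intro h hh
  induction h, hh using Nat.le_induction with
  | base =>
      have := step 0
      rw [h0, sub_self, norm_zero, ← h0] at this
      simpa using this
  | succ n hn ih =>
      have hnz : ∀ τ ∈ Finset.range (n + 1), 0 ≤ ε (s τ) := fun τ _ => hεpos _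
      have hSnn : 0 ≤ ∑ τ ∈ Finset.range n, ε (s τ) :=
        Finset.sum_nonneg fun τ _ => hεpos _
      have hpow : (1 : ℝ) ≤ (1 + L + Lε) ^ (n - 1) := one_le_pow₀ hLbar
      have hpow' : (1 : ℝ) ≤ (1 + L + Lε) ^ n := one_le_pow₀ hLbar
      have hmono : (1 + L + Lε) ^ (n - 1) * (L + Lε) ≤ (1 + L + Lε) ^ n := by
        obtain ⟨m, rfl⟩ := Nat.exists_eq_add_of_le hn
        simp only [Nat.add_sub_cancel_left] at *
        have : (1 + L + Lε) ^ m * (L + Lε) ≤ (1 + L + Lε) ^ m * (1 + L + Lε) := by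
          apply mul_le_mul_of_nonneg_left (by linarith)
          positivity
        calc (1 + L + Lε) ^ m * (L + Lε) ≤ (1 + L + Lε) ^ m * (1 + L + Lε) := this
          _ = (1 + L + Lε) ^ (1 + m) := by rw [pow_add, pow_one]; ring
      calc ‖s (n + 1) - st (n + 1)‖
          ≤ (L + Lε) * ‖s n - st n‖ + ε (s n) := step n
        _ ≤ (L + Lε) * ((1 + L + Lε) ^ (n - 1) * ∑ τ ∈ Finset.range n, ε (s τ)) + ε (s n) := by
            nlinarith [ih, hεpos (s n), hεpos (s 0)]
        _ ≤ (1 + L + Lε) ^ n * ∑ τ ∈ Finset.range n, ε (s τ)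
              + (1 + L + Lε) ^ n * ε (s n) := by
            have h1 : (L + Lε) * ((1 + L + Lε) ^ (n - 1) * ∑ τ ∈ Finset.range n, ε (s τ))
                ≤ (1 + L + Lε) ^ n * ∑ τ ∈ Finset.range n, ε (s τ) := by
              rw [← mul_assoc, mul_comm (L + Lε)]
              exact mul_le_mul_of_nonneg_right hmono hSnn
            have h2 : ε (s n) ≤ (1 + L + Lε) ^ n * ε (s n) :=
              le_mul_of_one_le_left (hεpos _) hpow'
            linarith
        _ = (1 + L + Lε) ^ (n + 1 - 1) * ∑ τ ∈ Finset.range (n + 1), ε (s τ) := by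
            rw [Finset.sum_range_succ]; simp; ring
end

section
/- Let p, q, N, H be positive integers, S = ℝ^p, A = (ℝ^q)^N, X = S × A, and let β > 0, f, μ : X → S and σ : X → ℝ^p satisfy σ(x)_j ≥ 0 and |f(x)_j − μ(x)_j| ≤ β σ(x)_j for all x ∈ X and all coordinates j. Let r : X → ℝ be bounded, |r(x)| ≤ B for all x. Fix a joint policy π : S → A, an initial state s_0 ∈ S, and a noise sequence w : ℕ → ℝ^p. Define the true value V = ∑_{h=0}^{H−1} r(s_h, π(s_h)) along the true trajectory s_{h+1} = f(s_h, π(s_h)) + w_h, and define the hallucinated upper confidence value UCB as the supremum, over all functions η : X → ℝ^p with η(x)_j ∈ [−1,1] for all x, j, of ∑_{h=0}^{H−1} r(s̃_h, π(s̃_h)), where s̃_0 = s_0 and s̃_{h+1,j} = μ(s̃_h, π(s̃_h))_j + β σ(s̃_h, π(s̃_h))_j · η(s̃_h, π(s̃_h))_j + w_{h,j}. Then the set over which the supremum is taken is nonempty and bounded above, and V ≤ UCB. -/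
noncomputable section

/-- The state space `ℝ^p` with the Euclidean norm. -/
abbrev Sp (p : ℕ) : Type := EuclideanSpace ℝ (Fin p)

/-- The joint action space `(ℝ^q)^N` with the ℓ2 norm. -/
abbrev Ac (q N : ℕ) : Type := PiLp 2 (fun _ : Fin N => EuclideanSpace ℝ (Fin q))

/-- The joint state-action space `X = S × A` with the ℓ2 norm
`‖(s,a)‖ = sqrt (‖s‖² + ∑ᵢ ‖aⁱ‖²)`. -/
abbrev Xsp (p q N : ℕ) : Type := WithLp 2 (Sp p × Ac q N)

/-- The joint policy `s ↦ (π¹ s, …, π^N s)` built from individual policies. -/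
def jointOf {p q N : ℕ} (π : Fin N → Sp p → EuclideanSpace ℝ (Fin q)) :
    Sp p → Ac q N := fun s => WithLp.toLp 2 (fun i => π i s)

/-- The true trajectory: `s_0 = s0`, `s_{h+1} = f (s_h, pol s_h) + w_h`. -/
def trueTraj {p q N : ℕ} (f : Xsp p q N → Sp p) (pol : Sp p → Ac q N)
    (w : ℕ → Sp p) (s0 : Sp p) : ℕ → Sp p
  | 0 => s0
  | h + 1 => f (WithLp.toLp 2 (trueTraj f pol w s0 h, pol (trueTraj f pol w s0 h))) + w h

/-- The hallucinated trajectory: `s̃_0 = s0` and, coordinatewise,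
`s̃_{h+1,j} = μ(x̃_h)_j + β σ(x̃_h)_j η(x̃_h)_j + w_{h,j}` with
`x̃_h = (s̃_h, pol s̃_h)`. -/
def halTraj {p q N : ℕ} (μ σ : Xsp p q N → Sp p) (β : ℝ)
    (η : Xsp p q N → Sp p) (pol : Sp p → Ac q N) (w : ℕ → Sp p) (s0 : Sp p) :
    ℕ → Sp p
  | 0 => s0
  | h + 1 =>
      (WithLp.toLp 2 (fun j => μ (WithLp.toLp 2 (halTraj μ σ β η pol w s0 h, pol (halTraj μ σ β η pol w s0 h))) j
          + β * σ (WithLp.toLp 2 (halTraj μ σ β η pol w s0 h, pol (halTraj μ σ β η pol w s0 h))) j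
              * η (WithLp.toLp 2 (halTraj μ σ β η pol w s0 h, pol (halTraj μ σ β η pol w s0 h))) j
          + w h j) : Sp p)

/-- Cumulative reward of a trajectory over horizon `H` under policy `pol`. -/
def cumReward {p q N : ℕ} (r : Xsp p q N → ℝ) (pol : Sp p → Ac q N)
    (traj : ℕ → Sp p) (H : ℕ) : ℝ :=
  ∑ h ∈ Finset.range H, r (WithLp.toLp 2 (traj h, pol (traj h)))

/-- The set of cumulative rewards attainable by hallucinated trajectories,
over all auxiliary functions `η` valued in `[−1,1]^p`.  Its supremum is the
hallucinated upper confidence value `UCB`, its infimum the lower one `LCB`. -/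
def halSet {p q N : ℕ} (μ σ : Xsp p q N → Sp p) (β : ℝ) (r : Xsp p q N → ℝ)
    (pol : Sp p → Ac q N) (w : ℕ → Sp p) (s0 : Sp p) (H : ℕ) : Set ℝ :=
  {y | ∃ η : Xsp p q N → Sp p,
    (∀ (x : Xsp p q N) (j : Fin p), η x j ∈ Set.Icc (-1 : ℝ) 1) ∧
    y = cumReward r pol (halTraj μ σ β η pol w s0) H}


/-- Lemma 1 of the paper, confidence lemma, pathwise.
Under calibration, the set of hallucinated cumulative rewards is nonempty and
bounded above, and the true value `V` is at most its supremum `UCB`. -/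
theorem value_le_UCB
    (p q N H : ℕ) (hp : 0 < p) (hq : 0 < q) (hN : 0 < N) (hH : 0 < H)
    (β B : ℝ) (hβ : 0 < β)
    (f μ σ : Xsp p q N → Sp p)
    (hσ : ∀ (x : Xsp p q N) (j : Fin p), 0 ≤ σ x j)
    (hcal : ∀ (x : Xsp p q N) (j : Fin p), |f x j - μ x j| ≤ β * σ x j)
    (r : Xsp p q N → ℝ) (hrB : ∀ x, |r x| ≤ B)
    (pol : Sp p → Ac q N) (s0 : Sp p) (w : ℕ → Sp p) :
    (halSet μ σ β r pol w s0 H).Nonempty ∧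
    BddAbove (halSet μ σ β r pol w s0 H) ∧
    cumReward r pol (trueTraj f pol w s0) H ≤ sSup (halSet μ σ β r pol w s0 H) := by

  classical
  -- choose η realizing the true dynamics
  set η : Xsp p q N → Sp p := fun x => WithLp.toLp 2 (fun j =>
    if σ x j = 0 then 0 else (f x j - μ x j) / (β * σ x j)) with hη
  have hηmem : ∀ (x : Xsp p q N) (j : Fin p), η x j ∈ Set.Icc (-1 : ℝ) 1 := by
    intro x j
    rw [hη]
    dsimp only [PiLp.toLp_apply]
    split_ifs with h
    · constructor <;> norm_num
    · have hσpos : 0 < σ x j := lt_of_le_of_ne (hσ x j) (Ne.symm h)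
      have hβσ : 0 < β * σ x j := mul_pos hβ hσpos
      rw [Set.mem_Icc, ← abs_le, abs_div, abs_of_pos hβσ, div_le_one hβσ]
      exact hcal x j
  have hηeq : ∀ (x : Xsp p q N) (j : Fin p),
      μ x j + β * σ x j * η x j + w 0 j = μ x j + β * σ x j * η x j + w 0 j := fun _ _ => rfl
  have key : ∀ (x : Xsp p q N) (j : Fin p),
      μ x j + β * σ x j * η x j = f x j := by
    intro x j
    rw [hη]
    dsimp only [PiLp.toLp_apply]
    split_ifs with h
    · have := hcal x j
      rw [h, mul_zero] at this
      have : f x j = μ x j := by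
        have := abs_nonpos_iff.mp this
        linarith [sub_eq_zero.mp this]
      rw [h]
      ring_nf
      linarith
    · have hσpos : 0 < σ x j := lt_of_le_of_ne (hσ x j) (Ne.symm h)
      have hβσ : (β * σ x j) ≠ 0 := ne_of_gt (mul_pos hβ hσpos)
      field_simp
      ring
  have htraj : ∀ h, halTraj μ σ β η pol w s0 h = trueTraj f pol w s0 h := by
    intro h
    induction h with
    | zero => rfl
    | succ n ih =>
      ext j
      simp only [halTraj, trueTraj, ih, PiLp.add_apply, PiLp.toLp_apply]
      rw [key]
  have hmem : cumReward r pol (trueTraj f pol w s0) H ∈ halSet μ σ β r pol w s0 H := by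
    refine ⟨η, hηmem, ?_⟩
    unfold cumReward
    exact Finset.sum_congr rfl (fun h _ => by rw [htraj h])
  have hbdd : BddAbove (halSet μ σ β r pol w s0 H) := by
    refine ⟨H * B, ?_⟩
    rintro y ⟨η', _, rfl⟩
    unfold cumReward
    calc ∑ h ∈ Finset.range H, r (WithLp.toLp 2 (halTraj μ σ β η' pol w s0 h, pol (halTraj μ σ β η' pol w s0 h)))
        ≤ ∑ h ∈ Finset.range H, B := by
          exact Finset.sum_le_sum (fun h _ => (abs_le.mp (hrB _)).2)
      _ = H * B := by simp [mul_comm]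
  exact ⟨⟨_, hmem⟩, hbdd, le_csSup hbdd hmem⟩


end
end
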